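/- Let ψ: ℝⁿ → ℝ ∪ {+∞} be convex, F₁, F₂: ℝ → (0,∞) measurable, h: (0,∞) → (0,∞) continuous, and g ∈ F⁺_{ψ*}. Then for every linear map T on ℝⁿ with |det T| = 1, one has V_{h,F₁,F₂}(ψ∘T, g∘T^{−t}) = V_{h,F₁,F₂}(ψ, g), where T^{−t} is the inverse of the transpose of T. -/

import Mathlib

open MeasureTheory Real Set
open scoped RealInnerProductSpace

noncomputable section

/-- `ℝⁿ`: `n`-dimensional Euclidean space. -/
abbrev En (n : ℕ) := EuclideanSpace ℝ (Fin n)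

variable {n : ℕ}

/-- The Legendre transform `ψ*(y) = sup_x (⟨x,y⟩ - ψ(x))`. -/
def legendreT (ψ : En n → ℝ) (y : En n) : ℝ :=
  sSup {r : ℝ | ∃ x : En n, r = ⟪x, y⟫ - ψ x}

/-- The determinant of the Hessian `∇²ψ(x)` (the Hessian being the derivative of the
gradient). -/
def hessDet (ψ : En n → ℝ) (x : En n) : ℝ :=
  LinearMap.det ((fderiv ℝ (gradient ψ) x).toLinearMap)

/-- `X_ψ`: the set of points where the Hessian of `ψ` exists and is invertible. -/
def Xset (ψ : En n → ℝ) : Set (En n) :=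
  {x | DifferentiableAt ℝ ψ x ∧ DifferentiableAt ℝ (gradient ψ) x ∧ hessDet ψ x ≠ 0}

/-- `I(g, φ) = ∫_{X_φ} g`. -/
def Ifun (φ g : En n → ℝ) : ℝ := ∫ y in Xset φ, g y

/-- Membership in `F⁺_φ`: positive on `X_φ` and integrable there with positive integral. -/
def FplusOn (φ g : En n → ℝ) : Prop :=
  (∀ y ∈ Xset φ, 0 < g y) ∧ IntegrableOn g (Xset φ) ∧ 0 < Ifun φ g

/-- Log-concavity of `g` on a set `S`. -/
def IsLogConcaveOn (S : Set (En n)) (g : En n → ℝ) : Prop :=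
  (∀ x ∈ S, 0 ≤ g x) ∧
    ∀ x ∈ S, ∀ y ∈ S, ∀ a b : ℝ, 0 ≤ a → 0 ≤ b → a + b = 1 →
      a • x + b • y ∈ S → g x ^ a * g y ^ b ≤ g (a • x + b • y)

/-- The general `L_p` affine surface area `as_{p,F₁,F₂}(ψ)`. -/
def aspGen (p : ℝ) (F₁ F₂ : ℝ → ℝ) (ψ : En n → ℝ) : ℝ :=
  ∫ x in Xset ψ, (F₁ (ψ x)) ^ ((n : ℝ) / ((n : ℝ) + p)) *
    (F₂ (⟪x, gradient ψ x⟫ - ψ x) * hessDet ψ x) ^ (p / ((n : ℝ) + p))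

/-- `V_{p,F₁,F₂}(ψ, g)`. -/
def Vp (p : ℝ) (F₁ F₂ : ℝ → ℝ) (ψ g : En n → ℝ) : ℝ :=
  ∫ x in Xset ψ,
    (F₂ (⟪x, gradient ψ x⟫ - ψ x) / g (gradient ψ x)) ^ (p / (n : ℝ)) * F₁ (ψ x)

/-- The Orlicz mixed integral `V_{h,F₁,F₂}(ψ, g)`. -/
def Vh (h F₁ F₂ : ℝ → ℝ) (ψ g : En n → ℝ) : ℝ :=
  ∫ x in Xset ψ, h (g (gradient ψ x) / F₂ (⟪x, gradient ψ x⟫ - ψ x)) * F₁ (ψ x)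

/-- The class `Φ`: positive continuous functions on `(0,∞)` that are constant or
strictly convex. -/
def PhiClass (h : ℝ → ℝ) : Prop :=
  ContinuousOn h (Ioi 0) ∧ (∀ t ∈ Ioi (0 : ℝ), 0 < h t) ∧
    ((∃ c, ∀ t ∈ Ioi (0 : ℝ), h t = c) ∨ StrictConvexOn ℝ (Ioi 0) h)

/-- The class `Ψ`: positive continuous functions on `(0,∞)` that are constant or
increasing and strictly concave. -/
def PsiClass (h : ℝ → ℝ) : Prop :=
  ContinuousOn h (Ioi 0) ∧ (∀ t ∈ Ioi (0 : ℝ), 0 < h t) ∧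
    ((∃ c, ∀ t ∈ Ioi (0 : ℝ), h t = c) ∨
      (StrictMonoOn h (Ioi 0) ∧ StrictConcaveOn ℝ (Ioi 0) h))

/-- `(√(2π))ⁿ`. -/
def sqrtTwoPiPow (n : ℕ) : ℝ := (Real.sqrt (2 * π)) ^ n

/-- The general Orlicz affine surface area (infimum version; used when `h ∈ Φ`). -/
def asOrliczInf (h F₁ F₂ : ℝ → ℝ) (ψ : En n → ℝ) : ℝ :=
  sInf {r | ∃ g : En n → ℝ, FplusOn (legendreT ψ) g ∧
    Ifun (legendreT ψ) g = sqrtTwoPiPow n ∧ r = Vh h F₁ F₂ ψ g}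

/-- The general Orlicz affine surface area (supremum version; used when `h ∈ Ψ`). -/
def asOrliczSup (h F₁ F₂ : ℝ → ℝ) (ψ : En n → ℝ) : ℝ :=
  sSup {r | ∃ g : En n → ℝ, FplusOn (legendreT ψ) g ∧
    Ifun (legendreT ψ) g = sqrtTwoPiPow n ∧ r = Vh h F₁ F₂ ψ g}

/-- The general Orlicz geominimal surface area (infimum version; used when `h ∈ Φ`). -/
def GOrliczInf (h F₁ F₂ : ℝ → ℝ) (ψ : En n → ℝ) : ℝ :=
  sInf {r | ∃ g : En n → ℝ, FplusOn (legendreT ψ) g ∧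
    IsLogConcaveOn (Xset (legendreT ψ)) g ∧
    Ifun (legendreT ψ) g = sqrtTwoPiPow n ∧ r = Vh h F₁ F₂ ψ g}

/-- The general Orlicz geominimal surface area (supremum version; used when `h ∈ Ψ`). -/
def GOrliczSup (h F₁ F₂ : ℝ → ℝ) (ψ : En n → ℝ) : ℝ :=
  sSup {r | ∃ g : En n → ℝ, FplusOn (legendreT ψ) g ∧
    IsLogConcaveOn (Xset (legendreT ψ)) g ∧
    Ifun (legendreT ψ) g = sqrtTwoPiPow n ∧ r = Vh h F₁ F₂ ψ g}

/-- The general `L_p` geominimal surface area (infimum version; used when `p ≥ 0`). -/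
def GpInf (p : ℝ) (F₁ F₂ : ℝ → ℝ) (ψ : En n → ℝ) : ℝ :=
  sInf {r | ∃ g : En n → ℝ, FplusOn (legendreT ψ) g ∧
    IsLogConcaveOn (Xset (legendreT ψ)) g ∧
    r = (Vp p F₁ F₂ ψ g) ^ ((n : ℝ) / ((n : ℝ) + p)) *
        (Ifun (legendreT ψ) g) ^ (p / ((n : ℝ) + p))}

/-- The general `L_p` geominimal surface area (supremum version; used when `-n ≠ p < 0`). -/
def GpSup (p : ℝ) (F₁ F₂ : ℝ → ℝ) (ψ : En n → ℝ) : ℝ :=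
  sSup {r | ∃ g : En n → ℝ, FplusOn (legendreT ψ) g ∧
    IsLogConcaveOn (Xset (legendreT ψ)) g ∧
    r = (Vp p F₁ F₂ ψ g) ^ ((n : ℝ) / ((n : ℝ) + p)) *
        (Ifun (legendreT ψ) g) ^ (p / ((n : ℝ) + p))}

/-- `F̆(t) = sup{√(F₁(t₁)F₂(t₂)) : (t₁+t₂)/2 ≥ t}`. -/
def Fbreve (F₁ F₂ : ℝ → ℝ) (t : ℝ) : ℝ :=
  sSup {r | ∃ t₁ t₂ : ℝ, t ≤ (t₁ + t₂) / 2 ∧ r = Real.sqrt (F₁ t₁ * F₂ t₂)}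

/-- `I(F, c) = ∫_{ℝⁿ} F(c²‖x‖²/2) dx`. -/
def IF (n : ℕ) (F : ℝ → ℝ) (c : ℝ) : ℝ := ∫ x : En n, F (c ^ 2 * ‖x‖ ^ 2 / 2)


section Aux

variable {n : ℕ}

/-- `T† := ContinuousLinearMap.adjoint`. Pull a composition through `toDual.symm`. -/
lemma toDual_symm_comp (L : En n →L[ℝ] ℝ) (S : En n →L[ℝ] En n) :
    (InnerProductSpace.toDual ℝ (En n)).symm (L.comp S) =
      ContinuousLinearMap.adjoint S ((InnerProductSpace.toDual ℝ (En n)).symm L) := by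
  apply ext_inner_right ℝ
  intro v
  rw [InnerProductSpace.toDual_symm_apply, ContinuousLinearMap.adjoint_inner_left,
    InnerProductSpace.toDual_symm_apply]
  rfl

lemma adjoint_symm_adjoint (T : En n ≃L[ℝ] En n) (w : En n) :
    ContinuousLinearMap.adjoint ((T.symm : En n →L[ℝ] En n))
      (ContinuousLinearMap.adjoint ((T : En n →L[ℝ] En n)) w) = w := by
  apply ext_inner_right ℝ
  intro v
  rw [ContinuousLinearMap.adjoint_inner_left, ContinuousLinearMap.adjoint_inner_left]
  simp

lemma adjoint_adjoint_symm (T : En n ≃L[ℝ] En n) (w : En n) :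
    ContinuousLinearMap.adjoint ((T : En n →L[ℝ] En n))
      (ContinuousLinearMap.adjoint ((T.symm : En n →L[ℝ] En n)) w) = w := by
  simpa using adjoint_symm_adjoint T.symm w

lemma gradient_comp_equiv (ψ : En n → ℝ) (T : En n ≃L[ℝ] En n) (x : En n) :
    gradient (fun z => ψ (T z)) x =
      ContinuousLinearMap.adjoint ((T : En n →L[ℝ] En n)) (gradient ψ (T x)) := by
  by_cases hd : DifferentiableAt ℝ ψ (T x)
  · have h1 : fderiv ℝ (fun z => ψ (T z)) x
        = (fderiv ℝ ψ (T x)).comp (T : En n →L[ℝ] En n) := by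
      have := fderiv_comp (g := ψ) (f := fun z => (T z : En n)) x hd T.differentiableAt
      rwa [T.fderiv] at this
    show (InnerProductSpace.toDual ℝ (En n)).symm (fderiv ℝ (fun z => ψ (T z)) x)
      = ContinuousLinearMap.adjoint ((T : En n →L[ℝ] En n))
          ((InnerProductSpace.toDual ℝ (En n)).symm (fderiv ℝ ψ (T x)))
    rw [h1, toDual_symm_comp]
  · have hd' : ¬ DifferentiableAt ℝ (fun z => ψ (T z)) x := by
      intro hc
      have hc2 : DifferentiableAt ℝ (fun z => ψ (T z)) (T.symm (T x)) := by
        rwa [T.symm_apply_apply]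
      have h2 : DifferentiableAt ℝ (fun z => ψ (T (T.symm z))) (T x) :=
        hc2.comp (T x) T.symm.differentiableAt
      apply hd
      have he : (fun z : En n => ψ (T (T.symm z))) = ψ := by
        funext z; rw [T.apply_symm_apply]
      rwa [he] at h2
    show (InnerProductSpace.toDual ℝ (En n)).symm (fderiv ℝ (fun z => ψ (T z)) x)
      = ContinuousLinearMap.adjoint ((T : En n →L[ℝ] En n))
          ((InnerProductSpace.toDual ℝ (En n)).symm (fderiv ℝ ψ (T x)))
    simp [fderiv_zero_of_not_differentiableAt hd, fderiv_zero_of_not_differentiableAt hd']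

lemma gradient_comp_equiv' (ψ : En n → ℝ) (T : En n ≃L[ℝ] En n) :
    gradient (fun z => ψ (T z)) = fun z =>
      ContinuousLinearMap.adjoint ((T : En n →L[ℝ] En n)) (gradient ψ (T z)) :=
  funext fun x => gradient_comp_equiv ψ T x

lemma det_adjoint_ne_zero (T : En n ≃L[ℝ] En n) :
    LinearMap.det ((ContinuousLinearMap.adjoint
      ((T : En n →L[ℝ] En n))) : En n →ₗ[ℝ] En n) ≠ 0 := by
  have hid : ((ContinuousLinearMap.adjoint ((T.symm : En n →L[ℝ] En n))).comp
      (ContinuousLinearMap.adjoint ((T : En n →L[ℝ] En n)))) = ContinuousLinearMap.id ℝ (En n) :=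
    ContinuousLinearMap.ext fun w => adjoint_symm_adjoint T w
  have hdet : LinearMap.det (((ContinuousLinearMap.adjoint
        ((T.symm : En n →L[ℝ] En n))) : En n →ₗ[ℝ] En n).comp
      ((ContinuousLinearMap.adjoint ((T : En n →L[ℝ] En n))) : En n →ₗ[ℝ] En n)) = 1 := by
    rw [← ContinuousLinearMap.toLinearMap_comp, hid]
    simp
  rw [LinearMap.det_comp] at hdet
  exact right_ne_zero_of_mul (hdet ▸ one_ne_zero)

lemma det_equiv_ne_zero (T : En n ≃L[ℝ] En n) :
    LinearMap.det (((T : En n →L[ℝ] En n)) : En n →ₗ[ℝ] En n) ≠ 0 := by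
  have hid : ((T : En n →L[ℝ] En n).comp ((T.symm : En n →L[ℝ] En n)))
      = ContinuousLinearMap.id ℝ (En n) :=
    ContinuousLinearMap.ext fun w => T.apply_symm_apply w
  have hdet : LinearMap.det ((((T : En n →L[ℝ] En n)) : En n →ₗ[ℝ] En n).comp
      (((T.symm : En n →L[ℝ] En n)) : En n →ₗ[ℝ] En n)) = 1 := by
    rw [← ContinuousLinearMap.toLinearMap_comp, hid]
    simp
  rw [LinearMap.det_comp] at hdet
  exact left_ne_zero_of_mul (hdet ▸ one_ne_zero)

lemma diff_comp_iff (φ : En n → En n) (T : En n ≃L[ℝ] En n) (x : En n) :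
    DifferentiableAt ℝ (fun z => φ (T z)) x ↔ DifferentiableAt ℝ φ (T x) := by
  constructor
  · intro hc
    have hc2 : DifferentiableAt ℝ (fun z => φ (T z)) (T.symm (T x)) := by
      rwa [T.symm_apply_apply]
    have h2 : DifferentiableAt ℝ (fun z => φ (T (T.symm z))) (T x) :=
      hc2.comp (T x) T.symm.differentiableAt
    have he : (fun z : En n => φ (T (T.symm z))) = φ := by
      funext z; rw [T.apply_symm_apply]
    rwa [he] at h2
  · intro hc
    exact hc.comp x T.differentiableAt

lemma diff_scalar_comp_iff (φ : En n → ℝ) (T : En n ≃L[ℝ] En n) (x : En n) :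
    DifferentiableAt ℝ (fun z => φ (T z)) x ↔ DifferentiableAt ℝ φ (T x) := by
  constructor
  · intro hc
    have hc2 : DifferentiableAt ℝ (fun z => φ (T z)) (T.symm (T x)) := by
      rwa [T.symm_apply_apply]
    have h2 : DifferentiableAt ℝ (fun z => φ (T (T.symm z))) (T x) :=
      hc2.comp (T x) T.symm.differentiableAt
    have he : (fun z : En n => φ (T (T.symm z))) = φ := by
      funext z; rw [T.apply_symm_apply]
    rwa [he] at h2
  · intro hc
    exact hc.comp x T.differentiableAt

lemma diff_gradient_comp_iff (ψ : En n → ℝ) (T : En n ≃L[ℝ] En n) (x : En n) :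
    DifferentiableAt ℝ (gradient (fun z => ψ (T z))) x ↔
      DifferentiableAt ℝ (gradient ψ) (T x) := by
  rw [gradient_comp_equiv' ψ T]
  constructor
  · intro hc
    have h2 : DifferentiableAt ℝ (fun z =>
        ContinuousLinearMap.adjoint ((T : En n →L[ℝ] En n)) (gradient ψ (T z))) x ↔
        DifferentiableAt ℝ (fun z => gradient ψ (T z)) x := by
      constructor
      · intro hc'
        have := ((ContinuousLinearMap.adjoint
          ((T.symm : En n →L[ℝ] En n))).differentiableAt).comp x hc'
        simpa [Function.comp_def, adjoint_symm_adjoint T] using this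
      · intro hc'
        exact ((ContinuousLinearMap.adjoint
          ((T : En n →L[ℝ] En n))).differentiableAt).comp x hc'
    rw [h2] at hc
    exact (diff_comp_iff (gradient ψ) T x).mp hc
  · intro hc
    exact ((ContinuousLinearMap.adjoint ((T : En n →L[ℝ] En n))).differentiableAt).comp x
      (hc.comp x T.differentiableAt)

lemma hessDet_comp (ψ : En n → ℝ) (T : En n ≃L[ℝ] En n) (x : En n)
    (hx : DifferentiableAt ℝ (gradient ψ) (T x)) :
    hessDet (fun z => ψ (T z)) x =
      LinearMap.det ((ContinuousLinearMap.adjoint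
        ((T : En n →L[ℝ] En n))) : En n →ₗ[ℝ] En n) *
      (hessDet ψ (T x) *
        LinearMap.det (((T : En n →L[ℝ] En n)) : En n →ₗ[ℝ] En n)) := by
  have hf1 : fderiv ℝ (gradient (fun z => ψ (T z))) x =
      (ContinuousLinearMap.adjoint ((T : En n →L[ℝ] En n))).comp
        ((fderiv ℝ (gradient ψ) (T x)).comp (T : En n →L[ℝ] En n)) := by
    rw [gradient_comp_equiv' ψ T]
    have h1 : fderiv ℝ (fun z => gradient ψ (T z)) x =
        (fderiv ℝ (gradient ψ) (T x)).comp (T : En n →L[ℝ] En n) := by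
      have := fderiv_comp (g := gradient ψ) (f := fun z => (T z : En n)) x hx
        T.differentiableAt
      rwa [T.fderiv] at this
    have h2 := fderiv_comp (g := fun w =>
        ContinuousLinearMap.adjoint ((T : En n →L[ℝ] En n)) w)
      (f := fun z => gradient ψ (T z)) x
      ((ContinuousLinearMap.adjoint ((T : En n →L[ℝ] En n))).differentiableAt)
      (hx.comp x T.differentiableAt)
    rw [(ContinuousLinearMap.adjoint ((T : En n →L[ℝ] En n))).fderiv, h1] at h2
    exact h2
  unfold hessDet
  rw [hf1]
  rw [ContinuousLinearMap.toLinearMap_comp, ContinuousLinearMap.toLinearMap_comp, LinearMap.det_comp,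
    LinearMap.det_comp]

lemma Xset_comp (ψ : En n → ℝ) (T : En n ≃L[ℝ] En n) :
    Xset (fun z => ψ (T z)) = ⇑T ⁻¹' (Xset ψ) := by
  ext x
  simp only [Xset, Set.mem_setOf_eq, Set.mem_preimage]
  constructor
  · rintro ⟨h1, h2, h3⟩
    have hd := (diff_scalar_comp_iff ψ T x).mp h1
    have hg := (diff_gradient_comp_iff ψ T x).mp h2
    refine ⟨hd, hg, ?_⟩
    intro hzero
    apply h3
    rw [hessDet_comp ψ T x hg, hzero, zero_mul, mul_zero]
  · rintro ⟨h1, h2, h3⟩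
    refine ⟨(diff_scalar_comp_iff ψ T x).mpr h1, (diff_gradient_comp_iff ψ T x).mpr h2, ?_⟩
    rw [hessDet_comp ψ T x h2]
    exact mul_ne_zero (det_adjoint_ne_zero T) (mul_ne_zero h3 (det_equiv_ne_zero T))

lemma measurePreserving_equiv (T : En n ≃L[ℝ] En n)
    (hT : |LinearMap.det ((T : En n →L[ℝ] En n).toLinearMap)| = 1) :
    MeasurePreserving (⇑T) (volume : Measure (En n)) volume := by
  refine ⟨T.continuous.measurable, ?_⟩
  have hdet : LinearMap.det ((T : En n →L[ℝ] En n).toLinearMap) ≠ 0 := det_equiv_ne_zero T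
  have hmap := MeasureTheory.Measure.map_linearMap_addHaar_eq_smul_addHaar
    (volume : Measure (En n)) hdet
  have hco : ⇑((T : En n →L[ℝ] En n).toLinearMap) = ⇑T := rfl
  rw [hco] at hmap
  rw [hmap, abs_inv, hT]
  simp

end Aux

/-- `SL±(n)`-invariance of the Orlicz mixed integral:
`V_{h,F₁,F₂}(ψ∘T, g∘T⁻ᵗ) = V_{h,F₁,F₂}(ψ, g)` whenever `|det T| = 1`.
The inverse of the transpose of `T` is the adjoint (transpose) of `T⁻¹`. -/
theorem statement2 (n : ℕ) (ψ : En n → ℝ) (F₁ F₂ h : ℝ → ℝ) (g : En n → ℝ)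
    (hψ : ConvexOn ℝ Set.univ ψ)
    (hF₁m : Measurable F₁) (hF₂m : Measurable F₂)
    (hF₁pos : ∀ t, 0 < F₁ t) (hF₂pos : ∀ t, 0 < F₂ t)
    (hhcont : ContinuousOn h (Set.Ioi 0)) (hhpos : ∀ t ∈ Set.Ioi (0 : ℝ), 0 < h t)
    (hg : FplusOn (legendreT ψ) g)
    (T : En n ≃L[ℝ] En n)
    (hT : |LinearMap.det ((T : En n →L[ℝ] En n).toLinearMap)| = 1) :
    Vh h F₁ F₂ (fun x => ψ (T x))
        (fun y => g (ContinuousLinearMap.adjoint ((T.symm : En n →L[ℝ] En n)) y)) =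
      Vh h F₁ F₂ ψ g := by
    classical
  set T' : En n →L[ℝ] En n := (T : En n →L[ℝ] En n) with hT'
  have hgrad := gradient_comp_equiv' ψ T
  have hXT := Xset_comp ψ T
  have hintegrand : ∀ x : En n,
      h ((fun y => g (ContinuousLinearMap.adjoint ((T.symm : En n →L[ℝ] En n)) y))
          (gradient (fun z => ψ (T z)) x) /
        F₂ (⟪x, gradient (fun z => ψ (T z)) x⟫ - (fun z => ψ (T z)) x)) *
        F₁ ((fun z => ψ (T z)) x)
      = h (g (gradient ψ (T x)) / F₂ (⟪T x, gradient ψ (T x)⟫ - ψ (T x))) * F₁ (ψ (T x)) := by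
    intro x
    simp only [hgrad, adjoint_symm_adjoint T, ContinuousLinearMap.adjoint_inner_right]
    rfl
  have hmp := measurePreserving_equiv T hT
  have hemb : MeasurableEmbedding (⇑T) := T.toHomeomorph.measurableEmbedding
  unfold Vh
  rw [hXT]
  rw [show (fun x => h ((fun y => g (ContinuousLinearMap.adjoint
        ((T.symm : En n →L[ℝ] En n)) y)) (gradient (fun z => ψ (T z)) x) /
        F₂ (⟪x, gradient (fun z => ψ (T z)) x⟫ - (fun z => ψ (T z)) x)) *
        F₁ ((fun z => ψ (T z)) x))
      = (fun x => (fun y => h (g (gradient ψ y) / F₂ (⟪y, gradient ψ y⟫ - ψ y)) * F₁ (ψ y)) (T x))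
    from funext hintegrand]
  exact hmp.setIntegral_preimage_emb hemb
    (fun y => h (g (gradient ψ y) / F₂ (⟪y, gradient ψ y⟫ - ψ y)) * F₁ (ψ y)) (Xset ψ)
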